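/- For 1 ≤ i ≤ k, the polynomial P_{i−1}·P_{k+1} − P_i·P_k equals ((n−1)/n)·([k+1, i−1, 0,…,0] − [k, i, 0,…,0]), and hence lies in S (its substitution x_j ↦ x_j² is a sum of squares). -/

import Mathlib

open Finset MvPolynomial

/-- The normalized `m`-th power sum `P_m = (1/n) Σ_j x_j^m`. -/
noncomputable def psum (n : ℕ) (m : ℕ) : MvPolynomial (Fin n) ℝ :=
  ((n : ℝ))⁻¹ • ∑ j, X j ^ m

/-- The normalized monomial symmetric polynomial `[α]`. -/
noncomputable def msym (n : ℕ) (α : Fin n → ℕ) : MvPolynomial (Fin n) ℝ :=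
  ((n.factorial : ℝ))⁻¹ • ∑ σ : Equiv.Perm (Fin n), ∏ j, X (σ j) ^ α j

lemma isSumSq_sum {ι R : Type*} [AddCommMonoid R] [Mul R] (s : Finset ι) (f : ι → R)
    (h : ∀ i ∈ s, IsSumSq (f i)) : IsSumSq (∑ i ∈ s, f i) :=
  Finset.sum_induction f IsSumSq (fun _ _ => IsSumSq.add) IsSumSq.zero h

lemma isSumSq_sq {R : Type*} [AddCommMonoid R] [Monoid R] (a : R) : IsSumSq (a ^ 2) := by
  rw [sq, ← add_zero (a * a)]
  exact IsSumSq.sq_add a IsSumSq.zero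

lemma pair_sq {R : Type*} [CommRing R] (u v : R) (a d : ℕ) :
    (u ^ a * v ^ (a + d + 2) - u ^ (a + 1) * v ^ (a + 1 + d)) +
      (v ^ a * u ^ (a + d + 2) - v ^ (a + 1) * u ^ (a + 1 + d)) =
    ∑ s ∈ Finset.range (d + 1), (u * v) ^ a * (v - u) ^ 2 * (v ^ s * u ^ (d - s)) := by
  have h : v ^ (d + 1) - u ^ (d + 1)
      = (∑ s ∈ Finset.range (d + 1), v ^ s * u ^ (d - s)) * (v - u) := by
    rw [← geom_sum₂_mul v u (d + 1)]
    exact congrArg (· * (v - u)) (Finset.sum_congr rfl fun s _ => rfl)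
  calc (u ^ a * v ^ (a + d + 2) - u ^ (a + 1) * v ^ (a + 1 + d)) +
      (v ^ a * u ^ (a + d + 2) - v ^ (a + 1) * u ^ (a + 1 + d))
      = (u * v) ^ a * (v - u) * (v ^ (d + 1) - u ^ (d + 1)) := by ring
    _ = (u * v) ^ a * (v - u) * ((∑ s ∈ Finset.range (d + 1), v ^ s * u ^ (d - s)) * (v - u)) := by
        rw [h]
    _ = ∑ s ∈ Finset.range (d + 1), (u * v) ^ a * (v - u) ^ 2 * (v ^ s * u ^ (d - s)) := by
        rw [Finset.sum_mul, Finset.mul_sum]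
        apply Finset.sum_congr rfl
        intro s _
        ring

lemma sum_perm_apply_zero {M : Type*} [AddCommMonoid M] (m : ℕ) (H : Fin (m + 1) → M) :
    ∑ e : Equiv.Perm (Fin (m + 1)), H (e 0) = m.factorial • ∑ q, H q := by
  rw [← Equiv.sum_comp Equiv.Perm.decomposeFin.symm (fun e : Equiv.Perm (Fin (m + 1)) => H (e 0)),
    Fintype.sum_prod_type]
  simp only [Equiv.Perm.decomposeFin_symm_apply_zero, Finset.sum_const, Finset.card_univ,
    Fintype.card_perm, Fintype.card_fin]
  rw [← Finset.smul_sum]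

lemma perm_sum_eq (m a b : ℕ) :
    ∑ σ : Equiv.Perm (Fin (m + 2)), (X (σ 0) : MvPolynomial (Fin (m + 2)) ℝ) ^ a * X (σ 1) ^ b
      = m.factorial •
        ((∑ j, (X j : MvPolynomial (Fin (m + 2)) ℝ) ^ a) * (∑ j, X j ^ b) - ∑ j, X j ^ (a + b)) := by
  rw [← Equiv.sum_comp Equiv.Perm.decomposeFin.symm
    (fun σ : Equiv.Perm (Fin (m + 2)) => (X (σ 0) : MvPolynomial (Fin (m + 2)) ℝ) ^ a * X (σ 1) ^ b),
    Fintype.sum_prod_type]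
  simp only [Equiv.Perm.decomposeFin_symm_apply_zero, Equiv.Perm.decomposeFin_symm_apply_one]
  have h1 : ∀ p : Fin (m + 2),
      ∑ e : Equiv.Perm (Fin (m + 1)),
        (X p : MvPolynomial (Fin (m + 2)) ℝ) ^ a * X (Equiv.swap 0 p ((e 0).succ)) ^ b
      = m.factorial • ∑ q : Fin (m + 1),
          (X p : MvPolynomial (Fin (m + 2)) ℝ) ^ a * X (Equiv.swap 0 p q.succ) ^ b := by
    intro p
    exact sum_perm_apply_zero m (fun q => (X p : MvPolynomial (Fin (m + 2)) ℝ) ^ a *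
      X (Equiv.swap 0 p q.succ) ^ b)
  rw [Finset.sum_congr rfl (fun p _ => h1 p), ← Finset.smul_sum]
  congr 1
  have h2 : ∀ p : Fin (m + 2),
      ∑ q : Fin (m + 1), (X (Equiv.swap 0 p q.succ) : MvPolynomial (Fin (m + 2)) ℝ) ^ b
        = (∑ y, (X y : MvPolynomial (Fin (m + 2)) ℝ) ^ b) - X p ^ b := by
    intro p
    have h3 := Fin.sum_univ_succ (fun y : Fin (m + 2) =>
      (X (Equiv.swap 0 p y) : MvPolynomial (Fin (m + 2)) ℝ) ^ b)
    rw [Equiv.sum_comp (Equiv.swap 0 p) (fun y => (X y : MvPolynomial (Fin (m + 2)) ℝ) ^ b),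
      Equiv.swap_apply_left] at h3
    linear_combination -h3
  calc ∑ p : Fin (m + 2), ∑ q : Fin (m + 1),
        (X p : MvPolynomial (Fin (m + 2)) ℝ) ^ a * X (Equiv.swap 0 p q.succ) ^ b
      = ∑ p : Fin (m + 2), (X p : MvPolynomial (Fin (m + 2)) ℝ) ^ a *
          ((∑ y, (X y : MvPolynomial (Fin (m + 2)) ℝ) ^ b) - X p ^ b) := by
        apply Finset.sum_congr rfl
        intro p _
        rw [← Finset.mul_sum, h2 p]
    _ = (∑ j, (X j : MvPolynomial (Fin (m + 2)) ℝ) ^ a) * (∑ j, X j ^ b) - ∑ j, X j ^ (a + b) := by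
        rw [Finset.sum_mul]
        rw [← Finset.sum_sub_distrib]
        apply Finset.sum_congr rfl
        intro p _
        rw [mul_sub, pow_add]

lemma msym_two (m a b : ℕ) :
    msym (m + 2) (fun t => if (t : ℕ) = 0 then a else if (t : ℕ) = 1 then b else 0)
      = (((m + 2 : ℕ) : ℝ) * ((m + 1 : ℕ) : ℝ))⁻¹ •
        ((∑ j, (X j : MvPolynomial (Fin (m + 2)) ℝ) ^ a) * (∑ j, X j ^ b) - ∑ j, X j ^ (a + b)) := by
  unfold msym
  have hprod : ∀ σ : Equiv.Perm (Fin (m + 2)),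
      (∏ j, (X (σ j) : MvPolynomial (Fin (m + 2)) ℝ) ^
        (if (j : ℕ) = 0 then a else if (j : ℕ) = 1 then b else 0))
      = X (σ 0) ^ a * X (σ 1) ^ b := by
    intro σ
    rw [Fin.prod_univ_succ, Fin.prod_univ_succ]
    simp [Fin.val_succ, Fin.succ_zero_eq_one, mul_assoc]
  rw [Finset.sum_congr rfl (fun σ _ => hprod σ), perm_sum_eq]
  rw [← Nat.cast_smul_eq_nsmul ℝ, smul_smul]
  congr 1
  have h1 : (m + 2).factorial = (m + 2) * ((m + 1) * m.factorial) := by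
    rw [Nat.factorial_succ, Nat.factorial_succ]
  rw [h1]
  have hm : (m.factorial : ℝ) ≠ 0 := Nat.cast_ne_zero.mpr m.factorial_ne_zero
  push_cast
  field_simp

theorem psum_newton_identity_and_sos (n i k : ℕ) (hn : 2 ≤ n) (hi : 1 ≤ i) (hik : i ≤ k) :
    psum n (i - 1) * psum n (k + 1) - psum n i * psum n k =
      (((n : ℝ) - 1) / n) •
        (msym n (fun t => if (t : ℕ) = 0 then k + 1 else if (t : ℕ) = 1 then i - 1 else 0) -
         msym n (fun t => if (t : ℕ) = 0 then k else if (t : ℕ) = 1 then i else 0)) ∧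
    IsSumSq (bind₁ (fun j : Fin n => (X j : MvPolynomial (Fin n) ℝ) ^ 2)
      (psum n (i - 1) * psum n (k + 1) - psum n i * psum n k)) := by
  obtain ⟨a, rfl⟩ : ∃ a, i = a + 1 := ⟨i - 1, by omega⟩
  obtain ⟨d, rfl⟩ : ∃ d, k = a + 1 + d := ⟨k - (a + 1), by omega⟩
  obtain ⟨m, rfl⟩ : ∃ m, n = m + 2 := ⟨n - 2, by omega⟩
  simp only [Nat.add_sub_cancel]
  set N : ℝ := ((m + 2 : ℕ) : ℝ) with hN
  have hN0 : N ≠ 0 := by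
    rw [hN]; push_cast; positivity
  have hps : ∀ u v : ℕ, _root_.psum (m + 2) u * _root_.psum (m + 2) v
      = (N⁻¹ * N⁻¹) • ((∑ j, (X j : MvPolynomial (Fin (m + 2)) ℝ) ^ u) * (∑ j, X j ^ v)) := by
    intro u v
    unfold _root_.psum
    rw [smul_mul_smul_comm]
  have hL : _root_.psum (m + 2) a * _root_.psum (m + 2) (a + 1 + d + 1) -
        _root_.psum (m + 2) (a + 1) * _root_.psum (m + 2) (a + 1 + d)
      = (N⁻¹ * N⁻¹) • ((∑ j, (X j : MvPolynomial (Fin (m + 2)) ℝ) ^ a) *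
          (∑ j, X j ^ (a + 1 + d + 1)) -
          (∑ j, X j ^ (a + 1)) * (∑ j, X j ^ (a + 1 + d))) := by
    rw [hps, hps, smul_sub]
  constructor
  · rw [hL, msym_two, msym_two]
    rw [← smul_sub, smul_smul]
    have he : a + 1 + d + 1 + a = a + 1 + d + (a + 1) := by omega
    rw [he, sub_sub_sub_cancel_right]
    rw [mul_comm (∑ j, (X j : MvPolynomial (Fin (m + 2)) ℝ) ^ (a + 1 + d + 1)) (∑ j, X j ^ a),
      mul_comm (∑ j, (X j : MvPolynomial (Fin (m + 2)) ℝ) ^ (a + 1 + d)) (∑ j, X j ^ (a + 1))]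
    congr 1
    rw [hN]
    push_cast
    have h2 : ((m : ℝ) + 2) ≠ 0 := by positivity
    have h1 : ((m : ℝ) + 1) ≠ 0 := by positivity
    field_simp
    ring
  · rw [hL]
    rw [map_smul, map_sub, map_mul, map_mul, map_sum, map_sum, map_sum, map_sum]
    simp only [map_pow, bind₁_X_right]
    have he2 : a + 1 + d + 1 = a + d + 2 := by omega
    rw [he2]
    have hT : (∑ j, ((X j : MvPolynomial (Fin (m + 2)) ℝ) ^ 2) ^ a) *
          (∑ j, ((X j : MvPolynomial (Fin (m + 2)) ℝ) ^ 2) ^ (a + d + 2)) -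
          (∑ j, ((X j : MvPolynomial (Fin (m + 2)) ℝ) ^ 2) ^ (a + 1)) *
          (∑ j, ((X j : MvPolynomial (Fin (m + 2)) ℝ) ^ 2) ^ (a + 1 + d))
        = ∑ j, ∑ l, (((X j : MvPolynomial (Fin (m + 2)) ℝ) ^ 2) ^ a * ((X l) ^ 2) ^ (a + d + 2) -
            ((X j) ^ 2) ^ (a + 1) * ((X l) ^ 2) ^ (a + 1 + d)) := by
      rw [Finset.sum_mul_sum, Finset.sum_mul_sum, ← Finset.sum_sub_distrib]
      exact Finset.sum_congr rfl fun j _ => (Finset.sum_sub_distrib _ _).symm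
    rw [hT]
    set T : MvPolynomial (Fin (m + 2)) ℝ :=
      ∑ j, ∑ l, (((X j : MvPolynomial (Fin (m + 2)) ℝ) ^ 2) ^ a * ((X l) ^ 2) ^ (a + d + 2) -
        ((X j) ^ 2) ^ (a + 1) * ((X l) ^ 2) ^ (a + 1 + d)) with hTdef
    have hswap : T = ∑ j, ∑ l, (((X l : MvPolynomial (Fin (m + 2)) ℝ) ^ 2) ^ a *
        ((X j) ^ 2) ^ (a + d + 2) - ((X l) ^ 2) ^ (a + 1) * ((X j) ^ 2) ^ (a + 1 + d)) := by
      rw [hTdef]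
      exact Finset.sum_comm
    have hTT : T + T = ∑ j, ∑ l, ∑ s ∈ Finset.range (d + 1),
        ((X j : MvPolynomial (Fin (m + 2)) ℝ) ^ 2 * (X l) ^ 2) ^ a *
          ((X l) ^ 2 - (X j) ^ 2) ^ 2 * (((X l) ^ 2) ^ s * ((X j) ^ 2) ^ (d - s)) := by
      nth_rewrite 2 [hswap]
      rw [hTdef, ← Finset.sum_add_distrib]
      refine Finset.sum_congr rfl fun j _ => ?_
      rw [← Finset.sum_add_distrib]
      exact Finset.sum_congr rfl fun l _ => pair_sq ((X j) ^ 2) ((X l) ^ 2) a d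
    have hhalf : T = (2 : ℝ)⁻¹ • (T + T) := by
      rw [← two_smul ℝ T, smul_smul]
      norm_num
    set c0 : ℝ := (N * Real.sqrt 2)⁻¹ with hc0
    have hsqrt : Real.sqrt 2 * Real.sqrt 2 = 2 := Real.mul_self_sqrt (by norm_num)
    have hc0sq : c0 ^ 2 = N⁻¹ * N⁻¹ * (2 : ℝ)⁻¹ := by
      rw [hc0, sq, ← mul_inv]
      rw [show N * Real.sqrt 2 * (N * Real.sqrt 2) = N * N * (Real.sqrt 2 * Real.sqrt 2) by ring,
        hsqrt]
      rw [mul_inv, mul_inv]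
    have hfin : (N⁻¹ * N⁻¹) • T = ∑ j, ∑ l, ∑ s ∈ Finset.range (d + 1),
        (C c0 * ((X j : MvPolynomial (Fin (m + 2)) ℝ) ^ a * X l ^ a *
          (X l ^ 2 - X j ^ 2) * X l ^ s * X j ^ (d - s))) ^ 2 := by
      rw [hhalf, hTT, smul_smul]
      rw [← hc0sq]
      rw [Finset.smul_sum]
      refine Finset.sum_congr rfl fun j _ => ?_
      rw [Finset.smul_sum]
      refine Finset.sum_congr rfl fun l _ => ?_
      rw [Finset.smul_sum]
      refine Finset.sum_congr rfl fun s _ => ?_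
      rw [smul_eq_C_mul, C_pow, mul_pow (C c0)]
      exact congrArg (C c0 ^ 2 * ·) (by ring)
    rw [hfin]
    refine isSumSq_sum _ _ fun j _ => isSumSq_sum _ _ fun l _ => isSumSq_sum _ _ fun s _ => ?_
    exact isSumSq_sq _
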